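/- Let G be a subgraph of the complete bipartite graph K_{7,30} with parts X (of size 7) and Y (of size 30) such that G contains no copy of K_{2,2}. If every vertex of X has degree at most 6 in G, then the bipartite complement of G contains a copy of K_{5,5}. -/

import Mathlib

/-- A subgraph of the complete bipartite graph `K_{m,n}` is identified with its
edge set, a finset of pairs `(x, y)` with `x` in the part `X = Fin m` and
`y` in the part `Y = Fin n`.  `bContains s t E` says that the bipartite graph
with edge set `E` contains a copy of `K_{s,t}`: there are `s` distinct
vertices of `X` and `t` distinct vertices of `Y` with all pairs present. -/
def bContains {m n : ℕ} (s t : ℕ) (E : Finset (Fin m × Fin n)) : Prop :=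
  ∃ (A : Finset (Fin m)) (B : Finset (Fin n)),
    A.card = s ∧ B.card = t ∧ ∀ x ∈ A, ∀ y ∈ B, (x, y) ∈ E

/-- The bipartite complement: edge set `(X × Y) \ E`. -/
def bCompl {m n : ℕ} (E : Finset (Fin m × Fin n)) : Finset (Fin m × Fin n) :=
  Finset.univ \ E

/-- The neighborhood `N_G(x) ⊆ Y` of a vertex `x ∈ X`. -/
def bNbhd {m n : ℕ} (E : Finset (Fin m × Fin n)) (x : Fin m) : Finset (Fin n) :=
  Finset.univ.filter (fun y => (x, y) ∈ E)

/-- The degree of a vertex `x ∈ X`. -/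
def bDeg {m n : ℕ} (E : Finset (Fin m × Fin n)) (x : Fin m) : ℕ :=
  (bNbhd E x).card

/-- `Δ(G_X)`: the maximum degree over the vertices of the part `X`. -/
def bMaxDegX {m n : ℕ} (E : Finset (Fin m × Fin n)) : ℕ :=
  Finset.univ.sup (fun x => bDeg E x)

open Finset

theorem stmt_12 (E : Finset (Fin 7 × Fin 30))
    (hK : ¬ bContains 2 2 E) (hdeg : ∀ x : Fin 7, bDeg E x ≤ 6) :
    bContains 5 5 (bCompl E) := by
  classical
  set dY : Fin 30 → ℕ := fun y => (univ.filter (fun x => (x, y) ∈ E)).card with hdY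
  have hsum : ∑ y : Fin 30, dY y ≤ 42 := by
    have heq : ∑ y : Fin 30, dY y = ∑ x : Fin 7, bDeg E x := by
      simp only [hdY, bDeg, bNbhd, card_filter]
      rw [Finset.sum_comm]
    rw [heq]
    calc ∑ x : Fin 7, bDeg E x ≤ ∑ _x : Fin 7, 6 :=
          Finset.sum_le_sum (fun x _ => hdeg x)
      _ = 42 := by simp
  set S : Fin 7 → Fin 7 → Finset (Fin 30) := fun p q =>
      univ.filter (fun y => ∀ x, (x, y) ∈ E → x = p ∨ x = q) with hS
  set g : Fin 30 → ℕ := fun y =>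
      (univ.filter (fun z : Fin 7 × Fin 7 => ∀ x, (x, y) ∈ E → x = z.1 ∨ x = z.2)).card with hg
  have hswap : ∑ z : Fin 7 × Fin 7, (S z.1 z.2).card = ∑ y : Fin 30, g y := by
    simp only [hS, hg, card_filter]
    rw [Finset.sum_comm]
  have h3 : ∀ y : Fin 30, 24 ≤ g y + 11 * dY y := by
    intro y
    set N := univ.filter (fun x : Fin 7 => (x, y) ∈ E) with hN
    have hmem : ∀ x, (x, y) ∈ E → x ∈ N := fun x hx => by simp [hN, hx]
    have hdval : dY y = N.card := rfl
    rcases Nat.lt_or_ge N.card 3 with hd | hd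
    swap
    · have : 33 ≤ 11 * dY y := by omega
      omega
    obtain h0 | h1 | h2 : N.card = 0 ∨ N.card = 1 ∨ N.card = 2 := by omega
    · rw [Finset.card_eq_zero] at h0
      have hall : ∀ z ∈ (univ : Finset (Fin 7 × Fin 7)),
          ∀ x, (x, y) ∈ E → x = z.1 ∨ x = z.2 := by
        intro z _ x hx
        exact absurd (hmem x hx) (by simp [h0])
      have hg49 : g y = 49 := by
        show (univ.filter (fun z : Fin 7 × Fin 7 => ∀ x, (x, y) ∈ E → x = z.1 ∨ x = z.2)).card = 49
        rw [Finset.filter_true_of_mem hall]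
        simp
      omega
    · obtain ⟨a, ha⟩ := Finset.card_eq_one.mp h1
      have hsub : univ.filter (fun z : Fin 7 × Fin 7 => z.1 = a ∨ z.2 = a) ⊆
          univ.filter (fun z : Fin 7 × Fin 7 => ∀ x, (x, y) ∈ E → x = z.1 ∨ x = z.2) := by
        intro z hz
        simp only [Finset.mem_filter, Finset.mem_univ, true_and] at hz ⊢
        intro x hx
        have hxa : x = a := by
          have := hmem x hx; rw [ha] at this; simpa using this
        rcases hz with h | h
        · left; rw [hxa, h]
        · right; rw [hxa, h]
      have hneg : (univ.filter (fun z : Fin 7 × Fin 7 => ¬(z.1 = a ∨ z.2 = a))).card = 36 := by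
        have hprod : (univ.filter (fun z : Fin 7 × Fin 7 => ¬(z.1 = a ∨ z.2 = a)))
            = (univ.filter (fun p : Fin 7 => p ≠ a)) ×ˢ (univ.filter (fun p : Fin 7 => p ≠ a)) := by
          ext z
          simp [Finset.mem_product, not_or]
        rw [hprod, Finset.card_product]
        have h6 : (univ.filter (fun p : Fin 7 => p ≠ a)).card = 6 := by
          have : (univ.filter (fun p : Fin 7 => p ≠ a)) = univ \ {a} := by
            ext p; simp
          rw [this, Finset.card_sdiff_of_subset (Finset.subset_univ _)]
          simp
        rw [h6]
      have htot := Finset.card_filter_add_card_filter_not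
        (s := (univ : Finset (Fin 7 × Fin 7)))
        (p := fun z : Fin 7 × Fin 7 => z.1 = a ∨ z.2 = a)
      have hcard13 : (univ.filter (fun z : Fin 7 × Fin 7 => z.1 = a ∨ z.2 = a)).card = 13 := by
        have huniv : (univ : Finset (Fin 7 × Fin 7)).card = 49 := by simp
        omega
      have hge : 13 ≤ g y := by
        have h := Finset.card_le_card hsub
        rw [hcard13] at h
        exact h
      omega
    · obtain ⟨a, b, hab, hN2⟩ := Finset.card_eq_two.mp h2
      have hmab : ∀ x, (x, y) ∈ E → x = a ∨ x = b := by
        intro x hx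
        have := hmem x hx; rw [hN2] at this; simpa using this
      have h1mem : (a, b) ∈ univ.filter
          (fun z : Fin 7 × Fin 7 => ∀ x, (x, y) ∈ E → x = z.1 ∨ x = z.2) := by
        simp only [Finset.mem_filter, Finset.mem_univ, true_and]
        exact hmab
      have h2mem : (b, a) ∈ univ.filter
          (fun z : Fin 7 × Fin 7 => ∀ x, (x, y) ∈ E → x = z.1 ∨ x = z.2) := by
        simp only [Finset.mem_filter, Finset.mem_univ, true_and]
        intro x hx
        exact (hmab x hx).symm
      have hge : 2 ≤ g y := by
        have h : 1 < (univ.filter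
            (fun z : Fin 7 × Fin 7 => ∀ x, (x, y) ∈ E → x = z.1 ∨ x = z.2)).card :=
          Finset.one_lt_card.mpr ⟨(a, b), h1mem, (b, a), h2mem, by
            simp [Prod.ext_iff]; intro h; exact fun h' => hab h⟩
        exact h
      omega
  have hkey : ∃ p q : Fin 7, 5 ≤ (S p q).card := by
    by_contra hcon
    push_neg at hcon
    have hub : ∑ z : Fin 7 × Fin 7, (S z.1 z.2).card ≤ 196 := by
      calc ∑ z : Fin 7 × Fin 7, (S z.1 z.2).card ≤ ∑ _z : Fin 7 × Fin 7, 4 :=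
            Finset.sum_le_sum (fun z _ => by have := hcon z.1 z.2; omega)
        _ = 196 := by simp
    have hlb : 720 ≤ ∑ y : Fin 30, g y + 11 * ∑ y : Fin 30, dY y := by
      have h := Finset.sum_le_sum (fun y (_ : y ∈ (univ : Finset (Fin 30))) => h3 y)
      rw [Finset.sum_add_distrib, ← Finset.mul_sum] at h
      simpa using h
    rw [hswap] at hub
    omega
  obtain ⟨p, q, hpq⟩ := hkey
  obtain ⟨B, hBsub, hBcard⟩ := Finset.exists_subset_card_eq hpq
  have hA0 : 5 ≤ ((univ : Finset (Fin 7)) \ {p, q}).card := by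
    have h2 : ({p, q} : Finset (Fin 7)).card ≤ 2 := Finset.card_insert_le p {q}
    have := Finset.card_sdiff_of_subset (Finset.subset_univ ({p, q} : Finset (Fin 7)))
    have huniv : (univ : Finset (Fin 7)).card = 7 := by simp
    omega
  obtain ⟨A, hAsub, hAcard⟩ := Finset.exists_subset_card_eq hA0
  refine ⟨A, B, hAcard, hBcard, ?_⟩
  intro x hxA yv hyB
  have hx := hAsub hxA
  have hy := hBsub hyB
  simp only [hS, Finset.mem_filter, Finset.mem_univ, true_and] at hy
  simp only [Finset.mem_sdiff, Finset.mem_univ, Finset.mem_insert, Finset.mem_singleton,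
    true_and, not_or] at hx
  simp only [bCompl, Finset.mem_sdiff, Finset.mem_univ, true_and]
  intro hmemE
  rcases hy x hmemE with h | h
  · exact hx.1 h
  · exact hx.2 h
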